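/- Let h : ℝᵈ → ℝ be L-smooth and μ-strongly convex with global minimizer y*. Then (2π/L)^{d/2} · exp(-h(y*)) ≤ ∫_{ℝᵈ} exp(-h(y)) dy ≤ (2π/μ)^{d/2} · exp(-h(y*)). -/

import Mathlib

open MeasureTheory
open scoped RealInnerProductSpace

lemma gauss_integrable {d : ℕ} {b : ℝ} (hb : 0 < b) :
    Integrable (fun y : EuclideanSpace ℝ (Fin d) => Real.exp (-b * ‖y‖ ^ 2)) := by
  have h := (GaussianFourier.integrable_cexp_neg_mul_sq_norm_add
    (V := EuclideanSpace ℝ (Fin d)) (b := (b : ℂ)) (by simpa using hb) 0 0).norm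
  have heq : (fun v : EuclideanSpace ℝ (Fin d) =>
      ‖Complex.exp (-(b:ℂ) * ‖v‖ ^ 2 + 0 * ⟪(0 : EuclideanSpace ℝ (Fin d)), v⟫)‖) =
      fun v => Real.exp (-b * ‖v‖ ^ 2) := by
    funext v
    rw [Complex.norm_exp]
    norm_num
    exact Or.inl (by rw [← Complex.ofReal_pow, Complex.ofReal_re])
  rwa [heq] at h

theorem stmt2 {d : ℕ} (h : EuclideanSpace ℝ (Fin d) → ℝ) (L mu : ℝ)
    (hmu : 0 < mu) (hmuL : mu ≤ L)
    (hdiff : Differentiable ℝ h)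
    (hsc : ∀ x y, h x + ⟪gradient h x, y - x⟫ + mu / 2 * ‖y - x‖ ^ 2 ≤ h y)
    (hsm : ∀ x y, h y ≤ h x + ⟪gradient h x, y - x⟫ + L / 2 * ‖y - x‖ ^ 2)
    (ystar : EuclideanSpace ℝ (Fin d)) (hystar : ∀ y, h ystar ≤ h y) :
    (2 * Real.pi / L) ^ ((d : ℝ) / 2) * Real.exp (-(h ystar)) ≤
        (∫ y : EuclideanSpace ℝ (Fin d), Real.exp (-(h y))) ∧
    (∫ y : EuclideanSpace ℝ (Fin d), Real.exp (-(h y))) ≤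
        (2 * Real.pi / mu) ^ ((d : ℝ) / 2) * Real.exp (-(h ystar)) := by
  have hL : 0 < L := lt_of_lt_of_le hmu hmuL
  -- gradient at ystar is zero
  have hmin : IsLocalMin h ystar := Filter.Eventually.of_forall hystar
  have hgrad : gradient h ystar = 0 := by
    rw [gradient, hmin.fderiv_eq_zero, map_zero]
  have hlow : ∀ y, h ystar + mu / 2 * ‖y - ystar‖ ^ 2 ≤ h y := by
    intro y
    have := hsc ystar y
    rwa [hgrad, inner_zero_left, add_zero] at this
  have hup : ∀ y, h y ≤ h ystar + L / 2 * ‖y - ystar‖ ^ 2 := by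
    intro y
    have := hsm ystar y
    rwa [hgrad, inner_zero_left, add_zero] at this
  -- pointwise bounds on exp(-h y)
  have hptlow : ∀ y : EuclideanSpace ℝ (Fin d),
      Real.exp (-(h ystar)) * Real.exp (-(L / 2) * ‖y - ystar‖ ^ 2) ≤ Real.exp (-(h y)) := by
    intro y
    rw [← Real.exp_add]
    apply Real.exp_le_exp.2
    have := hup y
    linarith
  have hptup : ∀ y : EuclideanSpace ℝ (Fin d),
      Real.exp (-(h y)) ≤ Real.exp (-(h ystar)) * Real.exp (-(mu / 2) * ‖y - ystar‖ ^ 2) := by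
    intro y
    rw [← Real.exp_add]
    apply Real.exp_le_exp.2
    have := hlow y
    linarith
  -- integrability
  have hgmu : Integrable (fun y : EuclideanSpace ℝ (Fin d) =>
      Real.exp (-(h ystar)) * Real.exp (-(mu / 2) * ‖y - ystar‖ ^ 2)) := by
    have := ((gauss_integrable (d := d) (b := mu / 2) (by positivity)).comp_sub_right
      ystar).const_mul (Real.exp (-(h ystar)))
    exact this
  have hgL : Integrable (fun y : EuclideanSpace ℝ (Fin d) =>
      Real.exp (-(h ystar)) * Real.exp (-(L / 2) * ‖y - ystar‖ ^ 2)) := by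
    have := ((gauss_integrable (d := d) (b := L / 2) (by positivity)).comp_sub_right
      ystar).const_mul (Real.exp (-(h ystar)))
    exact this
  have hint : Integrable (fun y : EuclideanSpace ℝ (Fin d) => Real.exp (-(h y))) := by
    refine hgmu.mono ?_ ?_
    · exact (Real.continuous_exp.comp (continuous_neg.comp hdiff.continuous)).aestronglyMeasurable
    · refine Filter.Eventually.of_forall fun y => ?_
      rw [Real.norm_eq_abs, Real.norm_eq_abs, abs_of_pos (Real.exp_pos _),
        abs_of_pos (by positivity)]
      exact hptup y
  -- values of gaussian integrals
  have hval : ∀ b : ℝ, 0 < b →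
      (∫ y : EuclideanSpace ℝ (Fin d), Real.exp (-(b / 2) * ‖y - ystar‖ ^ 2)) =
        (2 * Real.pi / b) ^ ((d : ℝ) / 2) := by
    intro b hb
    rw [integral_sub_right_eq_self (fun y : EuclideanSpace ℝ (Fin d) =>
      Real.exp (-(b / 2) * ‖y‖ ^ 2)) ystar]
    rw [GaussianFourier.integral_rexp_neg_mul_sq_norm (by positivity : (0:ℝ) < b / 2)]
    rw [finrank_euclideanSpace_fin]
    congr 1
    rw [div_div_eq_mul_div, mul_comm]
  constructor
  · calc (2 * Real.pi / L) ^ ((d : ℝ) / 2) * Real.exp (-(h ystar))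
        = ∫ y : EuclideanSpace ℝ (Fin d),
            Real.exp (-(h ystar)) * Real.exp (-(L / 2) * ‖y - ystar‖ ^ 2) := by
          rw [integral_const_mul, hval L hL, mul_comm]
      _ ≤ _ := integral_mono hgL hint hptlow
  · calc (∫ y : EuclideanSpace ℝ (Fin d), Real.exp (-(h y)))
        ≤ ∫ y : EuclideanSpace ℝ (Fin d),
            Real.exp (-(h ystar)) * Real.exp (-(mu / 2) * ‖y - ystar‖ ^ 2) :=
          integral_mono hint hgmu hptup
      _ = _ := by rw [integral_const_mul, hval mu hmu, mul_comm]
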